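/- For every multiplicatively symmetric polynomial p(x) of degree n over a field K, there exists a unique additively symmetric polynomial q(x) of degree n over K such that p(x) = x^{n/2}(q(√x) + q(1/√x) - q(0)); equivalently, p(x^2) = x^n (q(x) + q(1/x) - q(0)) as Laurent polynomials. -/

import Mathlib

open Polynomial LaurentPolynomial

lemma tl_coeff {K : Type*} [Semiring K] (p : K[X]) (k : ℤ) :
    (Polynomial.toLaurent p).coeff k = if 0 ≤ k then p.coeff k.toNat else 0 := by
  rw [LaurentPolynomial.coeff_toLaurent]
  split_ifs with h
  · conv_lhs => rw [show k = ((k.toNat : ℕ) : ℤ) by omega]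
    rw [show ((k.toNat : ℕ) : ℤ) = Nat.castEmbedding k.toNat from rfl,
      Finsupp.mapDomain_apply Nat.castEmbedding.injective]
    exact Polynomial.toFinsupp_apply _ _
  · rw [Finsupp.mapDomain_notin_range]
    rintro ⟨m, rfl⟩
    simp at h

lemma T_mul_apply {K : Type*} [Semiring K] (m : ℤ) (f : LaurentPolynomial K) (k : ℤ) :
    (LaurentPolynomial.T m * f : LaurentPolynomial K).coeff k = f.coeff (k - m) := by
  rw [show (T m : LaurentPolynomial K) = AddMonoidAlgebra.single m 1 from rfl,
    AddMonoidAlgebra.coeff_single_mul_apply, one_mul]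
  congr 1; omega

lemma C_apply' {K : Type*} [Semiring K] (a : K) (k : ℤ) :
    (LaurentPolynomial.C a : LaurentPolynomial K).coeff k = if k = 0 then a else 0 := by
  exact LaurentPolynomial.C_apply a k

lemma coeff_comp_neg_X {K : Type*} [CommRing K] (q : K[X]) (k : ℕ) :
    (q.comp (-Polynomial.X)).coeff k = (-1)^k * q.coeff k := by
  rw [Polynomial.comp_eq_sum_left, Polynomial.coeff_sum, Polynomial.sum_def]
  have : ∀ e ∈ q.support, (Polynomial.C (q.coeff e) * (-Polynomial.X)^e).coeff k
      = if e = k then (-1)^k * q.coeff k else 0 := by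
    intro e _
    have he : Polynomial.C (q.coeff e) * (-Polynomial.X)^e
        = Polynomial.C ((-1)^e * q.coeff e) * Polynomial.X^e := by
      rw [neg_pow]; simp only [map_mul, map_pow, Polynomial.C_neg, Polynomial.C_1]; ring
    rw [he, Polynomial.coeff_C_mul, Polynomial.coeff_X_pow]
    by_cases h : e = k
    · subst h; simp
    · rw [if_neg (fun hh : k = e => h hh.symm), if_neg h, mul_zero]
  rw [Finset.sum_congr rfl this, Finset.sum_ite_eq' q.support k]
  split_ifs with h
  · rfl
  · rw [Polynomial.notMem_support_iff.mp h, mul_zero]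

lemma rhs_apply {K : Type*} [Field K] (q : K[X]) (n : ℕ) (j : ℤ) :
    ((LaurentPolynomial.T (n : ℤ) *
      (Polynomial.toLaurent q + LaurentPolynomial.invert (Polynomial.toLaurent q)
        - LaurentPolynomial.C (q.coeff 0))) : LaurentPolynomial K).coeff j
    = (if (n : ℤ) ≤ j then q.coeff (j - n).toNat else 0)
      + (if j ≤ (n : ℤ) then q.coeff ((n : ℤ) - j).toNat else 0)
      - (if j = (n : ℤ) then q.coeff 0 else 0) := by
  rw [T_mul_apply, AddMonoidAlgebra.coeff_sub, Finsupp.sub_apply, AddMonoidAlgebra.coeff_add, Finsupp.add_apply, LaurentPolynomial.invert_apply,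
    tl_coeff, tl_coeff, C_apply']
  have h2 : -(j - (n:ℤ)) = (n:ℤ) - j := by ring
  rw [h2]
  split_ifs <;> first | rfl | (exfalso; omega)

lemma coeff_eq_of_eq {K : Type*} [Field K] (p q : K[X]) (n : ℕ)
    (h : Polynomial.toLaurent (p.comp (Polynomial.X ^ 2)) =
        LaurentPolynomial.T (n : ℤ) *
          (Polynomial.toLaurent q + LaurentPolynomial.invert (Polynomial.toLaurent q)
            - LaurentPolynomial.C (q.coeff 0))) (k : ℕ) :
    q.coeff k = (Polynomial.toLaurent (p.comp (Polynomial.X ^ 2))).coeff ((n : ℤ) + k) := by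
  have h3 := congrArg (fun f : LaurentPolynomial K => f.coeff ((n : ℤ) + k)) h
  rw [rhs_apply] at h3
  rw [h3]
  by_cases hk : k = 0
  · subst hk
    simp
  · rw [if_pos (by omega), if_neg (by omega), if_neg (by omega)]
    have : (((n:ℤ) + k - n)).toNat = k := by omega
    rw [this]
    ring

/-- For every multiplicatively symmetric polynomial `p` of degree `n` over a field `K`
(`x^n p(1/x) = p(x)` as Laurent polynomials) there is a unique additively symmetric
polynomial `q` of degree `n` (`q(x) = (-1)^n q(-x)`) such that, as Laurent polynomials,
`p(x²) = x^n (q(x) + q(1/x) - q(0))`. -/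
theorem stmt2 {K : Type*} [Field K] (p : Polynomial K) (n : ℕ) (hdeg : p.natDegree = n)
    (hsym : LaurentPolynomial.T (n : ℤ) * LaurentPolynomial.invert (Polynomial.toLaurent p)
      = Polynomial.toLaurent p) :
    ∃! q : Polynomial K, q.natDegree = n ∧ q = ((-1 : K) ^ n) • q.comp (-Polynomial.X) ∧
      Polynomial.toLaurent (p.comp (Polynomial.X ^ 2)) =
        LaurentPolynomial.T (n : ℤ) *
          (Polynomial.toLaurent q + LaurentPolynomial.invert (Polynomial.toLaurent q)
            - LaurentPolynomial.C (q.coeff 0)) := by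
  -- coefficient symmetry of p
  have hc : ∀ i : ℕ, i ≤ n → p.coeff (n - i) = p.coeff i := by
    intro i hi
    have h := congrArg (fun f : LaurentPolynomial K => f.coeff (i : ℤ)) hsym
    rw [T_mul_apply, LaurentPolynomial.invert_apply, tl_coeff, tl_coeff,
      if_pos (by omega : (0:ℤ) ≤ i), if_pos (by omega : (0:ℤ) ≤ -((i:ℤ) - n))] at h
    have e1 : (-((i:ℤ) - n)).toNat = n - i := by omega
    have e2 : ((i:ℤ)).toNat = i := by omega
    rw [e1, e2] at h
    exact h
  set q : Polynomial K := ∑ j ∈ Finset.range (n + 1),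
    Polynomial.monomial j (if (n + j) % 2 = 0 ∧ j ≤ n then p.coeff ((n + j) / 2) else 0) with hq
  have hqc : ∀ k : ℕ, q.coeff k
      = if (n + k) % 2 = 0 ∧ k ≤ n then p.coeff ((n + k) / 2) else 0 := by
    intro k
    rw [hq, Polynomial.finset_sum_coeff]
    simp only [Polynomial.coeff_monomial]
    rw [Finset.sum_ite_eq' (Finset.range (n + 1)) k]
    split_ifs with h h2 h2
    · rfl
    · rfl
    · exfalso; simp only [Finset.mem_range] at h; omega
    · rfl
  -- LHS coefficients
  have hl : ∀ j : ℤ, (Polynomial.toLaurent (p.comp (Polynomial.X ^ 2))).coeff j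
      = if 0 ≤ j ∧ (2:ℤ) ∣ j then p.coeff (j.toNat / 2) else 0 := by
    intro j
    have hE : p.comp (Polynomial.X ^ 2) = Polynomial.expand K 2 p :=
      (Polynomial.expand_eq_comp_X_pow (R := K) 2).symm
    rw [hE, tl_coeff]
    by_cases h0 : 0 ≤ j
    · rw [if_pos h0, Polynomial.coeff_expand (by norm_num)]
      by_cases h2 : (2:ℤ) ∣ j
      · rw [if_pos (by omega), if_pos ⟨h0, h2⟩]
      · rw [if_neg (by omega), if_neg (by tauto)]
    · rw [if_neg h0, if_neg (by tauto)]
  -- degree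
  have hdq : q.natDegree = n := by
    have hle : q.natDegree ≤ n := by
      rw [Polynomial.natDegree_le_iff_coeff_eq_zero]
      intro m hm
      rw [hqc, if_neg (by omega)]
    rcases Nat.eq_zero_or_pos n with hn | hn
    · omega
    · have hp0 : p ≠ 0 := by
        intro h0
        rw [h0, Polynomial.natDegree_zero] at hdeg
        omega
      have hne : q.coeff n ≠ 0 := by
        rw [hqc, if_pos ⟨by omega, le_refl n⟩]
        have : (n + n) / 2 = n := by omega
        rw [this, ← hdeg]
        exact fun hh => hp0 (Polynomial.leadingCoeff_eq_zero.mp hh)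
      exact le_antisymm hle (Polynomial.le_natDegree_of_ne_zero hne)
  -- additive symmetry
  have hsymq : q = ((-1 : K) ^ n) • q.comp (-Polynomial.X) := by
    apply Polynomial.ext
    intro k
    rw [Polynomial.coeff_smul, smul_eq_mul, coeff_comp_neg_X]
    by_cases hpar : (n + k) % 2 = 0
    · have h1 : ((-1:K))^n * ((-1:K))^k = 1 := by
        rw [← pow_add]
        exact Even.neg_one_pow (Nat.even_iff.mpr (by omega))
      rw [← mul_assoc, h1, one_mul]
    · rw [hqc, if_neg (by omega), mul_zero, mul_zero]
  -- main equation
  have heq : Polynomial.toLaurent (p.comp (Polynomial.X ^ 2)) =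
      LaurentPolynomial.T (n : ℤ) *
        (Polynomial.toLaurent q + LaurentPolynomial.invert (Polynomial.toLaurent q)
          - LaurentPolynomial.C (q.coeff 0)) := by
    apply LaurentPolynomial.ext
    intro j
    rw [hl j, rhs_apply]
    rcases lt_trichotomy j (n : ℤ) with hj | hj | hj
    · rw [if_neg (show ¬ (n:ℤ) ≤ j by omega), if_pos (show j ≤ (n:ℤ) by omega),
        if_neg (show ¬ j = (n:ℤ) by omega), zero_add, sub_zero, hqc]
      by_cases h0 : 0 ≤ j ∧ (2:ℤ) ∣ j
      · obtain ⟨h0a, h0b⟩ := h0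
        rw [if_pos ⟨h0a, h0b⟩, if_pos (show (n + ((n:ℤ) - j).toNat) % 2 = 0 ∧
          ((n:ℤ) - j).toNat ≤ n by omega)]
        have e : (n + ((n:ℤ) - j).toNat) / 2 = n - j.toNat / 2 := by omega
        rw [e]
        exact (hc (j.toNat / 2) (by omega)).symm
      · rw [if_neg h0, if_neg (show ¬ ((n + ((n:ℤ) - j).toNat) % 2 = 0 ∧
          ((n:ℤ) - j).toNat ≤ n) by omega)]
    · subst hj
      rw [if_pos (le_refl ((n:ℤ))), if_pos rfl]
      have e1 : ((n:ℤ) - n).toNat = 0 := by omega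
      have e0 : ((n:ℤ)).toNat = n := by omega
      rw [e1, e0, add_sub_cancel_right, hqc]
      by_cases h2 : (2:ℤ) ∣ (n:ℤ)
      · rw [if_pos ⟨by omega, h2⟩, if_pos (show (n + 0) % 2 = 0 ∧ 0 ≤ n by omega)]
        norm_num
      · rw [if_neg (fun hcon => h2 hcon.2), if_neg (show ¬ ((n + 0) % 2 = 0 ∧ 0 ≤ n) by omega)]
    · rw [if_pos (show (n:ℤ) ≤ j by omega), if_neg (show ¬ j ≤ (n:ℤ) by omega),
        if_neg (show ¬ j = (n:ℤ) by omega), add_zero, sub_zero, hqc]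
      by_cases h2 : (2:ℤ) ∣ j
      · by_cases h3 : j ≤ 2 * n
        · rw [if_pos (show (0:ℤ) ≤ j ∧ (2:ℤ) ∣ j from ⟨by omega, h2⟩),
            if_pos (show (n + (j - (n:ℤ)).toNat) % 2 = 0 ∧ (j - (n:ℤ)).toNat ≤ n by omega)]
          congr 1
          omega
        · rw [if_pos (show (0:ℤ) ≤ j ∧ (2:ℤ) ∣ j from ⟨by omega, h2⟩),
            if_neg (show ¬ ((n + (j - (n:ℤ)).toNat) % 2 = 0 ∧ (j - (n:ℤ)).toNat ≤ n) by omega)]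
          apply Polynomial.coeff_eq_zero_of_natDegree_lt
          rw [hdeg]
          omega
      · rw [if_neg (fun hcon => h2 hcon.2),
          if_neg (show ¬ ((n + (j - (n:ℤ)).toNat) % 2 = 0 ∧ (j - (n:ℤ)).toNat ≤ n) by omega)]
  refine ⟨q, ⟨hdq, hsymq, heq⟩, ?_⟩
  rintro q' ⟨_, _, h3'⟩
  apply Polynomial.ext
  intro k
  rw [coeff_eq_of_eq p q' n h3' k, coeff_eq_of_eq p q n heq k]
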